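/- Let K be a field, G a totally ordered abelian group, S a proper submonoid of the nonnegative cone G_{≥0}, and a ∈ G_{≥0} \ S. Consider the generalized power series ring D = [[K^S]] inside V = [[K^{G_{≥0}}]], and assume D and V have the same quotient field. If D is maximal with respect to excluding the monomial X^a (i.e., X^a ∉ D but X^a ∈ D[z] for every z in the quotient field not in D), then for every g ∈ G with 2g ≠ a: X^g ∈ D if and only if X^{a−g} ∉ D. In particular X^g ∈ D for all g > a, and y·m_V ⊆ D where y = X^a and m_V is the maximal ideal of V. -/

import Mathlib

variable {Γ : Type*} [AddCommGroup Γ] [LinearOrder Γ] [IsOrderedAddMonoid Γ] {K : Type*} [Field K]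

/-- The generalized power series ring `[[K^S]]`: the subring of the Hahn series field
`HahnSeries Γ K` consisting of series with support contained in the submonoid `S`. -/
def hahnSubring (K : Type*) [Field K] (S : AddSubmonoid Γ) : Subring (HahnSeries Γ K) where
  carrier := {f | ∀ g : Γ, f.coeff g ≠ 0 → g ∈ S}
  zero_mem' := by intro g hg; simp at hg
  one_mem' := by
    intro g hg
    rw [HahnSeries.coeff_one] at hg
    by_cases h : g = 0
    · exact h ▸ S.zero_mem
    · simp [h] at hg
  add_mem' := by
    intro a b ha hb g hg
    rw [HahnSeries.coeff_add] at hg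
    by_cases h : a.coeff g = 0
    · exact hb g (by intro h'; rw [h, h'] at hg; simp at hg)
    · exact ha g h
  neg_mem' := by
    intro a ha g hg
    rw [HahnSeries.coeff_neg] at hg
    exact ha g (by simpa using hg)
  mul_mem' := by
    intro a b ha hb g hg
    obtain ⟨i, hi, j, hj, rfl⟩ :=
      HahnSeries.support_mul_subset ((HahnSeries.mem_support _ _).mpr hg)
    exact S.add_mem (ha i hi) (hb j hj)

lemma single_mem_hahnSubring_iff {S : AddSubmonoid Γ} {g : Γ} :
    HahnSeries.single g (1 : K) ∈ hahnSubring K S ↔ g ∈ S := by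
  constructor
  · intro h
    exact h g (by rw [HahnSeries.coeff_single_same]; exact one_ne_zero)
  · intro hg c hc
    rw [HahnSeries.coeff_single] at hc
    split_ifs at hc with h
    · exact h ▸ hg
    · exact absurd rfl hc

/-- **Theorem 3.4, (1) ⇒ (2).**
Let `S` be a proper submonoid of the nonnegative cone of a totally ordered abelian group
`Γ`, `a ≥ 0` with `a ∉ S`, and `D = [[K^S]] ⊆ V = [[K^{Γ≥0}]]` with the same quotient
field.  If `D` is maximal with respect to excluding the monomial `X^a`, then for every
`g` with `2g ≠ a`, `X^g ∈ D` iff `X^{a-g} ∉ D`; in particular `X^g ∈ D` for all `g > a`,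
and `X^a · m_V ⊆ D`, where `m_V = { h ∈ V : h.coeff 0 = 0 }` is the maximal ideal of
`V`. -/
theorem maximal_excluding_hahnSubring_symmetry
    (S : AddSubmonoid Γ) (hS : S ≤ AddSubmonoid.nonneg Γ)
    (hproper : S ≠ AddSubmonoid.nonneg Γ)
    (a : Γ) (ha0 : 0 ≤ a) (haS : a ∉ S)
    (hfrac : ∀ x : HahnSeries Γ K,
      (∃ f g : HahnSeries Γ K, f ∈ hahnSubring K (AddSubmonoid.nonneg Γ) ∧
          g ∈ hahnSubring K (AddSubmonoid.nonneg Γ) ∧ g ≠ 0 ∧ x = f / g) ↔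
      (∃ f g : HahnSeries Γ K, f ∈ hahnSubring K S ∧ g ∈ hahnSubring K S ∧
          g ≠ 0 ∧ x = f / g))
    (hXa : HahnSeries.single a (1 : K) ∉ hahnSubring K S)
    (hmax : ∀ z : HahnSeries Γ K,
      (∃ f g : HahnSeries Γ K, f ∈ hahnSubring K S ∧ g ∈ hahnSubring K S ∧
          g ≠ 0 ∧ z = f / g) →
      z ∉ hahnSubring K S →
      HahnSeries.single a (1 : K) ∈
        Subring.closure (insert z (hahnSubring K S : Set (HahnSeries Γ K)))) :
    (∀ g : Γ, g + g ≠ a →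
      (HahnSeries.single g (1 : K) ∈ hahnSubring K S ↔
        HahnSeries.single (a - g) (1 : K) ∉ hahnSubring K S)) ∧
    (∀ g : Γ, a < g → HahnSeries.single g (1 : K) ∈ hahnSubring K S) ∧
    (∀ h : HahnSeries Γ K, h ∈ hahnSubring K (AddSubmonoid.nonneg Γ) →
      h.coeff 0 = 0 → HahnSeries.single a (1 : K) * h ∈ hahnSubring K S) := by

  -- Dispose of the case `a = 0`.
  rcases ha0.lt_or_eq with apos | rfl
  swap
  · exact absurd S.zero_mem haS
  -- Key lemma: if `0 ≤ h` and `h ∉ S`, then `a - n • h ∈ S` for some `n ≥ 1`.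
  have key : ∀ h : Γ, 0 ≤ h → h ∉ S → ∃ n : ℕ, 0 < n ∧ a - n • h ∈ S := by
    intro h hh0 hhS
    set z : HahnSeries Γ K := HahnSeries.single h (1 : K) with hz
    have hzV : z ∈ hahnSubring K (AddSubmonoid.nonneg Γ) := by
      intro c hc
      rw [hz, HahnSeries.coeff_single] at hc
      split_ifs at hc with hch
      · exact hch ▸ hh0
      · exact absurd rfl hc
    have hzfrac := (hfrac z).mp
      ⟨z, 1, hzV, (hahnSubring K _).one_mem, one_ne_zero, (div_one z).symm⟩
    have hzD : z ∉ hahnSubring K S := fun hmem =>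
      hhS (single_mem_hahnSubring_iff.mp hmem)
    have hXaIn := hmax z hzfrac hzD
    have hT : Subring.closure (insert z (hahnSubring K S : Set (HahnSeries Γ K))) ≤
        hahnSubring K (S ⊔ AddSubmonoid.closure {h}) := by
      rw [Subring.closure_le]
      rintro x (rfl | hx)
      · exact single_mem_hahnSubring_iff.mpr
          (SetLike.le_def.mp le_sup_right (AddSubmonoid.subset_closure (Set.mem_singleton h)))
      · intro c hc
        exact SetLike.le_def.mp le_sup_left (hx c hc)
    have haST : a ∈ S ⊔ AddSubmonoid.closure {h} :=
      hT hXaIn a (by rw [HahnSeries.coeff_single_same]; exact one_ne_zero)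
    rcases AddSubmonoid.mem_sup.mp haST with ⟨s, hs, t, ht, hst⟩
    rcases AddSubmonoid.mem_closure_singleton.mp ht with ⟨n, rfl⟩
    have hn : n ≠ 0 := by
      rintro rfl
      rw [zero_smul, add_zero] at hst
      exact haS (hst ▸ hs)
    exact ⟨n, Nat.pos_of_ne_zero hn, (eq_sub_of_add_eq hst) ▸ hs⟩
  -- Part 2: every `g > a` is in `S`.
  have part2 : ∀ g : Γ, a < g → g ∈ S := by
    intro g hg
    by_contra hgS
    obtain ⟨n, hn, hns⟩ := key g (le_of_lt (lt_trans apos hg)) hgS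
    have h1 : n • g ≤ a := sub_nonneg.mp (hS hns)
    have h2 : g ≤ n • g := by
      calc g = 1 • g := (one_smul ℕ g).symm
        _ ≤ n • g := nsmul_le_nsmul_left (le_of_lt (lt_trans apos hg)) hn
    exact absurd (lt_of_lt_of_le hg (le_trans h2 h1)) (lt_irrefl a)
  refine ⟨?_, fun g hg => single_mem_hahnSubring_iff.mpr (part2 g hg), ?_⟩
  · -- Part 1
    intro g hgne
    rw [single_mem_hahnSubring_iff, single_mem_hahnSubring_iff]
    constructor
    · intro hg hag
      refine haS ?_
      have := S.add_mem hg hag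
      rwa [add_sub_cancel] at this
    · intro hag
      by_contra hg
      have hga : a - g ≤ a := by
        by_contra hlt
        exact hag (part2 _ (lt_of_not_ge hlt))
      have hg0 : 0 ≤ g := (sub_le_self_iff a).mp hga
      have hgle : g ≤ a := by
        by_contra hlt
        exact hg (part2 _ (lt_of_not_ge hlt))
      obtain ⟨i, hi, hsi⟩ := key g hg0 hg
      obtain ⟨j, hj, hsj⟩ := key (a - g) (sub_nonneg.mpr hgle) hag
      rcases Nat.lt_or_ge i 2 with hi2 | hi2
      · have : i = 1 := by omega
        subst this
        rw [one_smul] at hsi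
        exact hag hsi
      rcases Nat.lt_or_ge j 2 with hj2 | hj2
      · have : j = 1 := by omega
        subst this
        rw [one_smul, sub_sub_cancel] at hsj
        exact hg hsj
      -- now `i, j ≥ 2`
      have h2j : 2 * j ≤ i * j := Nat.mul_le_mul_right j hi2
      have h2i : 2 * i ≤ i * j := by
        rw [mul_comm i j]
        exact Nat.mul_le_mul_right i hj2
      have hij_le : i + j ≤ i * j := by omega
      have hsum : (i + j) • a - (i * j) • a ∈ S := by
        have hmem := S.add_mem (S.nsmul_mem hsi j) (S.nsmul_mem hsj i)
        have hEq : j • (a - i • g) + i • (a - j • (a - g)) =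
            (i + j) • a - (i * j) • a := by
          simp only [smul_sub, smul_smul, add_smul, mul_comm j i]
          abel
        rwa [hEq] at hmem
      have hle1 : (i * j) • a ≤ (i + j) • a := sub_nonneg.mp (hS hsum)
      have hle2 : (i + j) • a ≤ (i * j) • a := nsmul_le_nsmul_left ha0 hij_le
      have heq : (i + j) • a = (i * j) • a := le_antisymm hle2 hle1
      have hk : (i * j - (i + j)) • a = 0 := by
        have hsplit : (i * j) • a = (i * j - (i + j)) • a + (i + j) • a := by
          rw [← add_smul]
          congr 1
          omega
        rw [← heq] at hsplit
        exact right_eq_add.mp hsplit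
      have hij0 : i * j - (i + j) = 0 := by
        by_contra hne
        exact absurd hk (ne_of_gt (nsmul_pos apos hne))
      have hijeq : i * j = i + j := by omega
      have hieq : i = j := by omega
      subst hieq
      have hii : i * i = i * 2 := by rw [hijeq]; ring
      have hi2' : i = 2 := Nat.eq_of_mul_eq_mul_left hi hii
      subst hi2'
      -- `a - 2•g ∈ S` and `a - 2•(a-g) ∈ S` force `a = g + g`.
      have h1 : 0 ≤ a - 2 • g := hS hsi
      have h2 : 0 ≤ a - 2 • (a - g) := hS hsj
      have hE : a - 2 • (a - g) = -(a - 2 • g) := by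
        rw [smul_sub, two_smul, two_smul]
        abel
      rw [hE, neg_nonneg] at h2
      have : a - 2 • g = 0 := le_antisymm h2 h1
      have : a = g + g := by
        have := sub_eq_zero.mp this
        rw [this, two_smul]
      exact hgne this.symm
  · -- Part 3
    intro h hV h0 c hc
    obtain ⟨x, hx, y, hy, rfl⟩ :=
      HahnSeries.support_mul_subset ((HahnSeries.mem_support _ _).mpr hc)
    have hxa : x = a := HahnSeries.support_single_subset hx
    subst hxa
    have hy0 : 0 ≤ y := hV y hy
    have hyne : y ≠ 0 := fun e => (e ▸ hy) h0
    exact part2 (x + y) (lt_add_of_pos_right x (lt_of_le_of_ne hy0 (Ne.symm hyne)))
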